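/- Let λ > 0 and η₀ > 0. Then there exist constants C = C(λ,η₀) > 0 and C₄ = C₄(λ,η₀) > 0 such that for all η ∈ ℝ with |η| ≥ η₀ and all x ∈ ℝ³∖{0}: |Γ_H^{η,λ}(x)| ≤ C |x|^{−1} e^{−C₄ |η|^{1/2} |x|} and |∇Γ_H^{η,λ}(x)| ≤ C (|x|^{−2} + |η|^{1/2}|x|^{−1}) e^{−C₄ |η|^{1/2} |x|}. -/

import Mathlib

open MeasureTheory Real Set

noncomputable section

/-- Three-dimensional Euclidean space. -/
abbrev E3 : Type := EuclideanSpace ℝ (Fin 3)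

/-- The wake function `s(x) = |x| + x₁`. -/
def wake (x : E3) : ℝ := ‖x‖ + x 0

/-- The `j`-th standard basis vector of `ℝ³`. -/
def e3 (j : Fin 3) : E3 := EuclideanSpace.single j 1

/-- Euclidean norm of a triple of reals. -/
def vnorm (v : Fin 3 → ℝ) : ℝ := Real.sqrt (∑ i, v i ^ 2)

/-- The square root of `z ∈ ℂ` with positive imaginary part
(well defined whenever `z ∉ ℝ≥0`, in particular for `z = −μ`, `μ = (λ/2)² + iη`, `η ≠ 0`). -/
def sqrtPosIm (z : ℂ) : ℂ :=
  if 0 < (z ^ ((1:ℂ)/2)).im then z ^ ((1:ℂ)/2) else -(z ^ ((1:ℂ)/2))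

/-- The fundamental solution `Γ_H^{η,λ}(x) = (4π|x|)⁻¹ e^{i√(−μ)|x| − (λ/2)x₁}`,
`μ = (λ/2)² + iη`, of `iηv − Δv − λ∂₁v = f` on `ℝ³`. -/
def GammaH (lam η : ℝ) (x : E3) : ℂ :=
  ((4 * Real.pi * ‖x‖ : ℝ) : ℂ)⁻¹ *
    Complex.exp (Complex.I * sqrtPosIm (-(((lam / 2) ^ 2 : ℂ) + η * Complex.I)) * (‖x‖ : ℂ)
      - ((lam / 2 : ℝ) : ℂ) * ((x 0 : ℝ) : ℂ))

lemma sqrtPosIm_spec (z : ℂ) (hz : z.im ≠ 0) :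
    (sqrtPosIm z) ^ 2 = z ∧ 0 < (sqrtPosIm z).im := by
  have hz0 : z ≠ 0 := fun h => hz (by simp [h])
  have hw : (z ^ ((1:ℂ)/2)) ^ 2 = z := by
    rw [sq, ← Complex.cpow_add _ _ hz0]
    norm_num
  have him : (z ^ ((1:ℂ)/2)).im ≠ 0 := by
    intro h
    apply hz
    have h2 := congrArg Complex.im hw
    rw [sq, Complex.mul_im, h] at h2
    simpa using h2.symm
  unfold sqrtPosIm
  split
  · exact ⟨hw, by assumption⟩
  · next hlt =>
    refine ⟨by rw [neg_pow]; simp [hw], ?_⟩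
    simp only [Complex.neg_im]
    rcases him.lt_or_gt with h | h
    · linarith
    · exact absurd h hlt

set_option maxHeartbeats 1000000 in
lemma core_arith (a η₀ A B Z t₀ K e t s : ℝ)
    (ha : 0 < a) (hη₀ : 0 < η₀)
    (ht₀2 : t₀^2 = η₀/2) (ht₀0 : 0 < t₀) (hK : K = a/t₀ + 1)
    (hη : η₀ ≤ e) (hB0 : 0 < B)
    (h1 : A^2 - B^2 = -(a^2)) (h2 : 4*(A^2*B^2) = e^2)
    (ht2 : t^2 = e/2) (ht0 : 0 < t) (hs2 : s^2 = e) (hs0 : 0 < s)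
    (hZ0 : 0 ≤ Z) (hZsq : Z^2 = A^2 + B^2) :
    1 ≤ K ∧ a + (1/(4*K^3))*s ≤ B ∧ Z ≤ K*s ∧ a ≤ K*s := by
  have he0 : 0 < e := lt_of_lt_of_le hη₀ hη
  have hadiv : 0 ≤ a / t₀ := by positivity
  have hK1 : 1 ≤ K := by rw [hK]; linarith
  have hK0 : 0 < K := by linarith
  have hts : t ≤ s := by nlinarith
  have hst : s ≤ 2*t := by nlinarith
  have ht₀t : t₀ ≤ t := by nlinarith
  have haK : a ≤ (K-1)*t := by
    have h3 : (K-1)*t₀ = a := by rw [hK]; field_simp; ring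
    nlinarith [mul_le_mul_of_nonneg_left ht₀t hadiv]
  have hprod : 4*B^2*(B^2 - a^2) = e^2 := by linear_combination h2 - 4*B^2*h1
  have hB2a : a^2 < B^2 := by nlinarith [mul_pos he0 he0]
  have hBgta : a < B := by nlinarith
  have hBe : B^2 ≤ a^2 + e/2 := by nlinarith [sq_nonneg a, mul_pos he0 he0]
  have hBat : B ≤ a + t := by nlinarith
  have hBKt : B ≤ K*t := by nlinarith
  have hBa2 : B + a ≤ 2*(K*t) := by nlinarith
  have hB2K : B^2 ≤ (K*t)^2 := by nlinarith
  have h8 : 4*B^2*(B+a) ≤ 8*(K*t)^3 := by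
    nlinarith [mul_le_mul hB2K hBa2 (by positivity) (by positivity)]
  have he2t : e = 2*t^2 := by linarith
  have h9 : (B-a)*(4*B^2*(B+a)) = 4*t^4 := by
    linear_combination hprod + (e + 2*t^2) * he2t
  have h10 : 4*t^4 ≤ (B-a)*(8*(K*t)^3) := by
    nlinarith [mul_nonneg (sub_nonneg.2 hBgta.le) (sub_nonneg.2 h8)]
  refine ⟨hK1, ?_, ?_, by nlinarith⟩
  · have h11 : t/(2*K^3) ≤ B - a := by
      rw [div_le_iff₀ (by positivity)]
      nlinarith [h10, pow_pos ht0 3, mul_pos (mul_pos ht0 ht0) ht0]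
    have h12 : (1/(4*K^3))*s ≤ t/(2*K^3) := by
      have h13 : (1/(4*K^3))*s ≤ (1/(4*K^3))*(2*t) := by gcongr
      have h14 : (1/(4*K^3))*(2*t) = t/(2*K^3) := by field_simp; ring
      linarith
    linarith
  · have hZ2 : Z^2 ≤ (K*s)^2 := by nlinarith
    nlinarith [hZ2, mul_pos hK0 hs0, add_nonneg hZ0 (le_of_lt (mul_pos hK0 hs0))]

lemma coord_le_norm (v : E3) (i : Fin 3) : |v i| ≤ ‖v‖ := by
  rw [EuclideanSpace.norm_eq, ← Real.sqrt_sq_eq_abs]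
  apply Real.sqrt_le_sqrt
  have : (v i)^2 = ‖v i‖^2 := by rw [Real.norm_eq_abs, sq_abs]
  rw [this]
  exact Finset.single_le_sum (f := fun j => ‖v j‖^2) (fun j _ => by positivity)
    (Finset.mem_univ i)


set_option maxHeartbeats 2000000 in
/-- **Pointwise estimates of `Γ_H^{η,λ}` and its gradient:** for `λ > 0`, `η₀ > 0` there are
`C, C₄ > 0` such that for all `|η| ≥ η₀` and `x ≠ 0`:
`|Γ_H^{η,λ}(x)| ≤ C|x|⁻¹ e^{−C₄|η|^{1/2}|x|}` and
`|∇Γ_H^{η,λ}(x)| ≤ C(|x|⁻² + |η|^{1/2}|x|⁻¹) e^{−C₄|η|^{1/2}|x|}`. -/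
theorem GammaH_pointwise_estimates (lam η₀ : ℝ) (hlam : 0 < lam) (hη₀ : 0 < η₀) :
    ∃ C > 0, ∃ C₄ > 0, ∀ η : ℝ, η₀ ≤ |η| → ∀ x : E3, x ≠ 0 →
      ‖GammaH lam η x‖ ≤ C * ‖x‖⁻¹ * Real.exp (-C₄ * |η| ^ ((1:ℝ)/2) * ‖x‖) ∧
      ‖fderiv ℝ (GammaH lam η) x‖ ≤
        C * (‖x‖ ^ (-(2:ℝ)) + |η| ^ ((1:ℝ)/2) * ‖x‖⁻¹) *
          Real.exp (-C₄ * |η| ^ ((1:ℝ)/2) * ‖x‖) := by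
  have hπ : (0:ℝ) < Real.pi := Real.pi_pos
  set t₀ := Real.sqrt (η₀/2) with ht₀_def
  have ht₀0 : 0 < t₀ := Real.sqrt_pos.2 (by linarith)
  have ht₀2 : t₀^2 = η₀/2 := Real.sq_sqrt (by linarith)
  set K := lam/2/t₀ + 1 with hK_def
  have hK0 : 0 < K := by
    have : 0 ≤ lam/2/t₀ := div_nonneg (by linarith) ht₀0.le
    rw [hK_def]; linarith
  have hC0 : 0 < (1+2*K)/(4*Real.pi) + 1 := by
    have : 0 ≤ (1+2*K)/(4*Real.pi) := div_nonneg (by linarith) (by positivity)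
    linarith
  have hC₄0 : 0 < 1/(4*K^3) := by
    apply div_pos one_pos
    have := pow_pos hK0 3
    linarith
  refine ⟨(1+2*K)/(4*Real.pi) + 1, hC0, 1/(4*K^3), hC₄0, ?_⟩
  intro η hη x hx
  have hr : 0 < ‖x‖ := norm_pos_iff.2 hx
  have he0 : 0 < |η| := lt_of_lt_of_le hη₀ hη
  have hηne : η ≠ 0 := fun h => by simp [h] at he0
  set z : ℂ := -(((lam / 2) ^ 2 : ℂ) + η * Complex.I) with hz_def
  have hz_im : z.im = -η := by
    simp [hz_def, Complex.div_im]
    norm_cast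
  have hz_re : z.re = -((lam/2)^2) := by
    simp [hz_def]
    norm_cast
  obtain ⟨hsq, him⟩ := sqrtPosIm_spec z (by rw [hz_im]; simpa using hηne)
  set ζ := sqrtPosIm z with hζ_def
  have h1 : ζ.re^2 - ζ.im^2 = -((lam/2)^2) := by
    have h := congrArg Complex.re hsq
    rw [sq, Complex.mul_re, hz_re] at h
    linear_combination h
  have h2 : 2 * (ζ.re * ζ.im) = -η := by
    have h := congrArg Complex.im hsq
    rw [sq, Complex.mul_im, hz_im] at h
    linarith [h]
  have h2' : 4*(ζ.re^2*ζ.im^2) = |η|^2 := by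
    linear_combination (2*(ζ.re*ζ.im) - η)*h2 - sq_abs η
  have hZsq : (‖ζ‖)^2 = ζ.re^2 + ζ.im^2 := by
    rw [Complex.sq_norm, Complex.normSq_apply]; ring
  set s := Real.sqrt |η| with hs_def
  have hs2 : s^2 = |η| := Real.sq_sqrt he0.le
  have hs0 : 0 < s := Real.sqrt_pos.2 he0
  obtain ⟨hK1, hBlb, habsζ, haKs⟩ :=
    core_arith (lam/2) η₀ ζ.re ζ.im (‖ζ‖) t₀ K |η| (Real.sqrt (|η|/2)) s
      (by linarith) hη₀ ht₀2 ht₀0 hK_def hη him h1 h2'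
      (Real.sq_sqrt (by linarith)) (Real.sqrt_pos.2 (by linarith)) hs2 hs0
      (norm_nonneg ζ) hZsq
  -- rewrite rpow
  have hrw1 : |η| ^ ((1:ℝ)/2) = s := (Real.sqrt_eq_rpow |η|).symm
  have hrw2 : ‖x‖ ^ (-(2:ℝ)) = (‖x‖^2)⁻¹ := by
    rw [Real.rpow_neg (norm_nonneg x), show ((2:ℝ)) = ((2:ℕ):ℝ) by norm_num,
      Real.rpow_natCast]
  clear_value s K t₀ ζ z
  rw [hrw1, hrw2]
  -- exponent bound
  have hx0 : |x 0| ≤ ‖x‖ := coord_le_norm x 0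
  have hexp_re : (Complex.I * ζ * (‖x‖:ℂ) - ((lam/2 : ℝ):ℂ) * ((x 0 : ℝ):ℂ)).re
      = -(ζ.im * ‖x‖) - lam/2 * x 0 := by
    simp [Complex.mul_re, Complex.mul_im]
  have hexp_le : -(ζ.im * ‖x‖) - lam/2 * x 0 ≤ -(1/(4*K^3)) * s * ‖x‖ := by
    have hng : -(x 0) ≤ ‖x‖ := le_trans (neg_le_abs _) hx0
    have hm1 : lam/2 * (-(x 0)) ≤ lam/2 * ‖x‖ :=
      mul_le_mul_of_nonneg_left hng (by linarith)
    have hm2 : (1/(4*K^3))*s * ‖x‖ ≤ (ζ.im - lam/2) * ‖x‖ :=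
      mul_le_mul_of_nonneg_right (by linarith) hr.le
    linarith [hm1, hm2]
  have h4π : (0:ℝ) < 4*Real.pi := by positivity
  have h4πi : (0:ℝ) < (4*Real.pi)⁻¹ := inv_pos.2 h4π
  have hCa : (4*Real.pi)⁻¹ ≤ (1+2*K)/(4*Real.pi) + 1 := by
    rw [div_eq_mul_inv]
    have h5 : (4*Real.pi)⁻¹ ≤ (1+2*K)*(4*Real.pi)⁻¹ :=
      le_mul_of_one_le_left h4πi.le (by linarith)
    linarith
  have hCb : (4*Real.pi)⁻¹ * (2*K) ≤ (1+2*K)/(4*Real.pi) + 1 := by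
    rw [div_eq_mul_inv, mul_comm ((4*Real.pi)⁻¹) (2*K)]
    have h5 : (2*K)*(4*Real.pi)⁻¹ ≤ (1+2*K)*(4*Real.pi)⁻¹ :=
      mul_le_mul_of_nonneg_right (by linarith) h4πi.le
    linarith
  have hEpos : (0:ℝ) < Real.exp (-(1/(4*K^3)) * s * ‖x‖) := Real.exp_pos _
  constructor
  · -- first estimate
    have hfunx : GammaH lam η x = ((((4*Real.pi*‖x‖)⁻¹ : ℝ)) : ℂ) *
        Complex.exp (Complex.I * ζ * (‖x‖:ℂ) - ((lam/2 : ℝ):ℂ) * ((x 0 : ℝ):ℂ)) := by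
      rw [GammaH, ← hz_def, ← hζ_def, Complex.ofReal_inv]
    rw [hfunx, norm_mul, Complex.norm_real, Real.norm_eq_abs, Complex.norm_exp, hexp_re,
      abs_of_pos (inv_pos.2 (by positivity : (0:ℝ) < 4*Real.pi*‖x‖))]
    have hE : Real.exp (-(ζ.im * ‖x‖) - lam/2 * x 0) ≤ Real.exp (-(1/(4*K^3)) * s * ‖x‖) :=
      Real.exp_le_exp.2 hexp_le
    have hcoef : (4*Real.pi*‖x‖)⁻¹ ≤ ((1+2*K)/(4*Real.pi) + 1) * ‖x‖⁻¹ := by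
      rw [mul_inv]
      exact mul_le_mul_of_nonneg_right hCa (inv_nonneg.2 hr.le)
    exact mul_le_mul hcoef hE (Real.exp_pos _).le (by positivity)
  · -- gradient estimate
    have hfun : GammaH lam η = fun y : E3 =>
        ((((4*Real.pi*‖y‖)⁻¹ : ℝ)) : ℂ) *
          Complex.exp (Complex.I * ζ * (‖y‖:ℂ) - ((lam/2 : ℝ):ℂ) * ((y 0 : ℝ):ℂ)) := by
      funext y
      rw [GammaH, ← hz_def, ← hζ_def, Complex.ofReal_inv]
    have hq : (4*Real.pi*‖x‖ : ℝ) ≠ 0 := by positivity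
    have hdiffn : DifferentiableAt ℝ (fun y : E3 => ‖y‖) x :=
      (contDiffAt_norm (𝕜 := ℝ) (n := 1) hx).differentiableAt (by norm_num)
    set D := fderiv ℝ (fun y : E3 => ‖y‖) x with hD_def
    have hDat : HasFDerivAt (fun y : E3 => ‖y‖) D x := hdiffn.hasFDerivAt
    have hDle : ‖D‖ ≤ 1 := by
      simpa using hDat.le_of_lipschitz lipschitzWith_one_norm
    set P : E3 →L[ℝ] ℝ := EuclideanSpace.proj (0 : Fin 3) with hP_def
    have hPle : ‖P‖ ≤ 1 := by
      refine ContinuousLinearMap.opNorm_le_bound _ zero_le_one fun v => ?_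
      rw [one_mul]
      simpa [hP_def, Real.norm_eq_abs] using coord_le_norm v 0
    set Dc : E3 →L[ℝ] ℂ := Complex.ofRealCLM.comp D with hDc_def
    set Pc : E3 →L[ℝ] ℂ := Complex.ofRealCLM.comp P with hPc_def
    have hDcle : ‖Dc‖ ≤ 1 := by
      refine le_trans (ContinuousLinearMap.opNorm_comp_le _ _) ?_
      rw [Complex.ofRealCLM_norm]
      simpa using hDle
    have hPcle : ‖Pc‖ ≤ 1 := by
      refine le_trans (ContinuousLinearMap.opNorm_comp_le _ _) ?_
      rw [Complex.ofRealCLM_norm]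
      simpa using hPle
    have hq' : HasFDerivAt (fun y : E3 => 4*Real.pi*‖y‖) ((4*Real.pi) • D) x :=
      hDat.const_mul _
    set U : E3 →L[ℝ] ℝ :=
      (-(ContinuousLinearMap.mulLeftRight ℝ ℝ (4*Real.pi*‖x‖)⁻¹ (4*Real.pi*‖x‖)⁻¹)).comp
        ((4*Real.pi) • D) with hU_def
    have hinv : HasFDerivAt (fun y : E3 => (4*Real.pi*‖y‖)⁻¹) U x :=
      (hasFDerivAt_inv' hq).comp x hq'
    have hUle : ‖U‖ ≤ (4*Real.pi)⁻¹ * (‖x‖^2)⁻¹ := by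
      refine le_trans (ContinuousLinearMap.opNorm_comp_le _ _) ?_
      rw [norm_neg, norm_smul]
      have h1 : ‖ContinuousLinearMap.mulLeftRight ℝ ℝ (4*Real.pi*‖x‖)⁻¹ (4*Real.pi*‖x‖)⁻¹‖
          ≤ (4*Real.pi*‖x‖)⁻¹ * (4*Real.pi*‖x‖)⁻¹ := by
        have h0 := ContinuousLinearMap.opNorm_mulLeftRight_apply_apply_le ℝ ℝ
          (4*Real.pi*‖x‖)⁻¹ (4*Real.pi*‖x‖)⁻¹
        rwa [Real.norm_eq_abs,
          abs_of_pos (inv_pos.2 (by positivity : (0:ℝ) < 4*Real.pi*‖x‖))] at h0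
      have h2 : ‖(4*Real.pi : ℝ)‖ * ‖D‖ ≤ 4*Real.pi := by
        rw [Real.norm_eq_abs, abs_of_pos h4π]
        have := mul_le_mul_of_nonneg_left hDle h4π.le
        simpa using this
      calc ‖ContinuousLinearMap.mulLeftRight ℝ ℝ (4*Real.pi*‖x‖)⁻¹ (4*Real.pi*‖x‖)⁻¹‖ *
            (‖(4*Real.pi : ℝ)‖ * ‖D‖)
          ≤ ((4*Real.pi*‖x‖)⁻¹ * (4*Real.pi*‖x‖)⁻¹) * (4*Real.pi) := by
            apply mul_le_mul h1 h2 (by positivity) (by positivity)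
        _ = (4*Real.pi)⁻¹ * (‖x‖^2)⁻¹ := by
            field_simp
    set Uc : E3 →L[ℝ] ℂ := Complex.ofRealCLM.comp U with hUc_def
    have hUcat : HasFDerivAt (fun y : E3 => ((((4*Real.pi*‖y‖)⁻¹:ℝ)):ℂ)) Uc x :=
      Complex.ofRealCLM.hasFDerivAt.comp x hinv
    have hUcle : ‖Uc‖ ≤ (4*Real.pi)⁻¹ * (‖x‖^2)⁻¹ := by
      refine le_trans (ContinuousLinearMap.opNorm_comp_le _ _) ?_
      rw [Complex.ofRealCLM_norm]
      simpa using hUle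
    have hrc : HasFDerivAt (fun y : E3 => ((‖y‖:ℝ):ℂ)) Dc x :=
      Complex.ofRealCLM.hasFDerivAt.comp x hDat
    have hpc : HasFDerivAt (fun y : E3 => ((y 0 : ℝ):ℂ)) Pc x :=
      Complex.ofRealCLM.hasFDerivAt.comp x P.hasFDerivAt
    have hg : HasFDerivAt
        (fun y : E3 => Complex.I * ζ * (‖y‖:ℂ) - ((lam/2 : ℝ):ℂ) * ((y 0 : ℝ):ℂ))
        ((Complex.I * ζ) • Dc - ((lam/2:ℝ):ℂ) • Pc) x :=
      (hrc.const_mul _).sub (hpc.const_mul _)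
    have hexpat : HasFDerivAt
        (fun y : E3 => Complex.exp (Complex.I * ζ * (‖y‖:ℂ) - ((lam/2 : ℝ):ℂ) * ((y 0 : ℝ):ℂ)))
        (Complex.exp (Complex.I * ζ * (‖x‖:ℂ) - ((lam/2 : ℝ):ℂ) * ((x 0 : ℝ):ℂ)) •
          ((Complex.I * ζ) • Dc - ((lam/2:ℝ):ℂ) • Pc)) x := hg.cexp
    have hF : HasFDerivAt (fun y : E3 =>
        ((((4*Real.pi*‖y‖)⁻¹ : ℝ)) : ℂ) *
          Complex.exp (Complex.I * ζ * (‖y‖:ℂ) - ((lam/2 : ℝ):ℂ) * ((y 0 : ℝ):ℂ)))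
        (((((4*Real.pi*‖x‖)⁻¹ : ℝ)) : ℂ) •
          (Complex.exp (Complex.I * ζ * (‖x‖:ℂ) - ((lam/2 : ℝ):ℂ) * ((x 0 : ℝ):ℂ)) •
            ((Complex.I * ζ) • Dc - ((lam/2:ℝ):ℂ) • Pc)) +
         Complex.exp (Complex.I * ζ * (‖x‖:ℂ) - ((lam/2 : ℝ):ℂ) * ((x 0 : ℝ):ℂ)) • Uc) x :=
      hUcat.mul hexpat
    rw [hfun, hF.fderiv]
    -- now bound the norm
    have hEG : ‖Complex.exp (Complex.I * ζ * (‖x‖:ℂ) - ((lam/2 : ℝ):ℂ) * ((x 0 : ℝ):ℂ))‖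
        ≤ Real.exp (-(1/(4*K^3)) * s * ‖x‖) := by
      rw [Complex.norm_exp, hexp_re]
      exact Real.exp_le_exp.2 hexp_le
    have hg'le : ‖(Complex.I * ζ) • Dc - ((lam/2:ℝ):ℂ) • Pc‖ ≤ ‖ζ‖ + lam/2 := by
      refine le_trans (norm_sub_le _ _)
        (le_trans (add_le_add (ContinuousLinearMap.opNorm_smul_le _ _) (ContinuousLinearMap.opNorm_smul_le _ _)) ?_)
      have h1 : ‖Complex.I * ζ‖ = ‖ζ‖ := by
        rw [norm_mul, Complex.norm_I, one_mul]
      have h2 : ‖((lam/2:ℝ):ℂ)‖ = lam/2 := by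
        rw [Complex.norm_real, Real.norm_eq_abs, abs_of_pos (by linarith)]
      rw [h1, h2]
      exact add_le_add (mul_le_of_le_one_right (norm_nonneg ζ) hDcle)
        (mul_le_of_le_one_right (by linarith) hPcle)
    have hc1 : ‖(((((4*Real.pi*‖x‖)⁻¹ : ℝ)) : ℂ))‖ = (4*Real.pi*‖x‖)⁻¹ := by
      rw [Complex.norm_real, Real.norm_eq_abs,
        abs_of_pos (inv_pos.2 (by positivity : (0:ℝ) < 4*Real.pi*‖x‖))]
    have hZa : ‖ζ‖ + lam/2 ≤ 2*(K*s) := by linarith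
    set E0 := ‖Complex.exp (Complex.I * ζ * (‖x‖:ℂ) - ((lam/2 : ℝ):ℂ) * ((x 0 : ℝ):ℂ))‖ with hE0_def
    have hE00 : 0 ≤ E0 := norm_nonneg _
    calc ‖(((((4*Real.pi*‖x‖)⁻¹ : ℝ)) : ℂ)) •
          (Complex.exp (Complex.I * ζ * (‖x‖:ℂ) - ((lam/2 : ℝ):ℂ) * ((x 0 : ℝ):ℂ)) •
            ((Complex.I * ζ) • Dc - ((lam/2:ℝ):ℂ) • Pc)) +
         Complex.exp (Complex.I * ζ * (‖x‖:ℂ) - ((lam/2 : ℝ):ℂ) * ((x 0 : ℝ):ℂ)) • Uc‖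
        ≤ (4*Real.pi*‖x‖)⁻¹ * (E0 * ‖(Complex.I * ζ) • Dc - ((lam/2:ℝ):ℂ) • Pc‖) +
            E0 * ‖Uc‖ := by
          refine le_trans (norm_add_le _ _) (add_le_add ?_ (ContinuousLinearMap.opNorm_smul_le _ _))
          refine le_trans (ContinuousLinearMap.opNorm_smul_le _ _) ?_
          rw [hc1]
          exact mul_le_mul_of_nonneg_left (ContinuousLinearMap.opNorm_smul_le _ _) (by positivity)
      _ ≤ (4*Real.pi*‖x‖)⁻¹ * (Real.exp (-(1/(4*K^3)) * s * ‖x‖) * (2*(K*s))) +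
            Real.exp (-(1/(4*K^3)) * s * ‖x‖) * ((4*Real.pi)⁻¹ * (‖x‖^2)⁻¹) := by
          refine add_le_add
            (mul_le_mul_of_nonneg_left
              (mul_le_mul hEG (hg'le.trans hZa) (norm_nonneg _) hEpos.le) (by positivity))
            (mul_le_mul hEG hUcle (norm_nonneg _) hEpos.le)
      _ = ((4*Real.pi)⁻¹ * (2*K)) * (s * ‖x‖⁻¹ * Real.exp (-(1/(4*K^3)) * s * ‖x‖)) +
            (4*Real.pi)⁻¹ * ((‖x‖^2)⁻¹ * Real.exp (-(1/(4*K^3)) * s * ‖x‖)) := by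
          rw [mul_inv]
          ring
      _ ≤ ((1+2*K)/(4*Real.pi) + 1) * (s * ‖x‖⁻¹ * Real.exp (-(1/(4*K^3)) * s * ‖x‖)) +
            ((1+2*K)/(4*Real.pi) + 1) * ((‖x‖^2)⁻¹ * Real.exp (-(1/(4*K^3)) * s * ‖x‖)) := by
          refine add_le_add (mul_le_mul_of_nonneg_right hCb ?_)
            (mul_le_mul_of_nonneg_right hCa ?_)
          · exact mul_nonneg (mul_nonneg hs0.le (inv_nonneg.2 hr.le)) hEpos.le
          · exact mul_nonneg (by positivity) hEpos.le
      _ = ((1+2*K)/(4*Real.pi) + 1) * ((‖x‖^2)⁻¹ + s * ‖x‖⁻¹) *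
            Real.exp (-(1/(4*K^3)) * s * ‖x‖) := by ring


end
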